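/- Let A be a finite set and φ: A^ω → ℝ continuous, satisfying: for all u ∈ A* and α, β ∈ A^ω, φ(α) ≤ φ(β) implies φ(uα) ≤ φ(uβ). Then for any sequence of nonempty finite words (x_n)_{n≥0}, if φ(x₀x₁x₂…) > sup_{n≥0} φ(x_n^ω) then φ(x₀x₁x₂…) ≤ φ(x₀x₂x₄…). -/

import Mathlib

open Filter Topology

/-- Concatenation of a finite word with an infinite word. -/
def wcat {A : Type*} (u : List A) (β : ℕ → A) : ℕ → A :=
  fun n => if h : n < u.length then u.get ⟨n, h⟩ else β (n - u.length)

/-- The periodic infinite word `u^ω` obtained by repeating the finite word `u`. -/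
noncomputable def wpow {A : Type*} [Nonempty A] (u : List A) : ℕ → A :=
  fun n => u.getD (n % u.length) (Classical.arbitrary A)

/-- `γ` is the infinite concatenation `x₀x₁x₂…` of the nonempty finite words `x n`. -/
def IsInfiniteConcat {A : Type*} (x : ℕ → List A) (γ : ℕ → A) : Prop :=
  ∀ (k i : ℕ) (h : i < (x k).length),
    γ ((∑ j ∈ Finset.range k, (x j).length) + i) = (x k).get ⟨i, h⟩

namespace CondAC

variable {A : Type*} [Nonempty A]

/-- Partial sums of the lengths. -/
def S (x : ℕ → List A) (k : ℕ) : ℕ := ∑ j ∈ Finset.range k, (x j).length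

lemma S_succ (x : ℕ → List A) (k : ℕ) : S x (k + 1) = S x k + (x k).length :=
  Finset.sum_range_succ _ _

lemma S_mono (x : ℕ → List A) : Monotone (S x) := fun _ _ h =>
  Finset.sum_le_sum_of_subset (Finset.range_subset_range.mpr h)

lemma le_S (x : ℕ → List A) (hx : ∀ n, x n ≠ []) (k : ℕ) : k ≤ S x k := by
  induction k with
  | zero => simp [S]
  | succ k ih =>
    rw [S_succ]
    have := List.length_pos_iff.mpr (hx k)
    omega

/-- The canonical infinite concatenation. -/
noncomputable def cat (x : ℕ → List A) : ℕ → A := fun m =>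
  (x (Nat.findGreatest (fun k => S x k ≤ m) (m + 1))).getD
    (m - S x (Nat.findGreatest (fun k => S x k ≤ m) (m + 1))) (Classical.arbitrary A)

lemma cat_spec' (x : ℕ → List A) (hx : ∀ n, x n ≠ []) (k i : ℕ) (h : i < (x k).length) :
    cat x (S x k + i) = (x k).getD i (Classical.arbitrary A) := by
  set m := S x k + i with hm
  have hkg : Nat.findGreatest (fun k' => S x k' ≤ m) (m + 1) = k := by
    apply le_antisymm
    · by_contra hlt
      push_neg at hlt
      have h3 : S x (Nat.findGreatest (fun k' => S x k' ≤ m) (m + 1)) ≤ m :=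
        Nat.findGreatest_spec (P := fun k' => S x k' ≤ m) (m := 0) (by omega) (by simp [S])
      have h2 : S x (k + 1) ≤ S x (Nat.findGreatest (fun k' => S x k' ≤ m) (m + 1)) :=
        S_mono x hlt
      rw [S_succ] at h2
      omega
    · exact Nat.le_findGreatest (by have := le_S x hx k; omega) (by omega)
  show (x _).getD (m - S x _) _ = _
  rw [hkg]
  congr 1
  omega

lemma cat_spec (x : ℕ → List A) (hx : ∀ n, x n ≠ []) (k i : ℕ) (h : i < (x k).length) :
    cat x (S x k + i) = (x k).get ⟨i, h⟩ := by
  rw [cat_spec' x hx k i h, List.getD_eq_getElem _ _ h]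
  simp [List.get_eq_getElem]

lemma exists_decomp (x : ℕ → List A) (hx : ∀ n, x n ≠ []) (m : ℕ) :
    ∃ k i, i < (x k).length ∧ m = S x k + i := by
  set k := Nat.findGreatest (fun k' => S x k' ≤ m) (m + 1) with hk
  have h1 : S x k ≤ m :=
    Nat.findGreatest_spec (P := fun k' => S x k' ≤ m) (m := 0) (by omega) (by simp [S])
  have h2 : m < S x (k + 1) := by
    by_contra hc
    push_neg at hc
    have hkb : k + 1 ≤ m + 1 := by have := le_S x hx (k + 1); omega
    exact Nat.findGreatest_is_greatest (P := fun k' => S x k' ≤ m) (by rw [← hk]; omega) hkb hc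
  rw [S_succ] at h2
  exact ⟨k, m - S x k, by omega, by omega⟩

lemma eq_cat (x : ℕ → List A) (hx : ∀ n, x n ≠ []) (γ : ℕ → A)
    (hγ : IsInfiniteConcat x γ) : γ = cat x := by
  funext m
  obtain ⟨k, i, h, rfl⟩ := exists_decomp x hx m
  rw [cat_spec x hx k i h]
  exact hγ k i h

lemma wcat_lt (u : List A) (β : ℕ → A) {n : ℕ} (h : n < u.length) :
    wcat u β n = u.get ⟨n, h⟩ := dif_pos h

lemma wcat_add (u : List A) (β : ℕ → A) (m : ℕ) : wcat u β (u.length + m) = β m := by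
  unfold wcat
  rw [dif_neg (by omega)]
  congr 1
  omega

lemma cat_succ (x : ℕ → List A) (hx : ∀ n, x n ≠ []) :
    cat x = wcat (x 0) (cat (fun n => x (n + 1))) := by
  have h : IsInfiniteConcat x (wcat (x 0) (cat (fun n => x (n + 1)))) := by
    intro k i h
    cases k with
    | zero =>
      have he : (∑ j ∈ Finset.range 0, (x j).length) + i = i := by simp
      rw [he, wcat_lt (x 0) _ h]
    | succ k =>
      have hs : (∑ j ∈ Finset.range (k + 1), (x j).length) + i
          = (x 0).length + (S (fun n => x (n + 1)) k + i) := by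
        have := Finset.sum_range_succ' (fun j => (x j).length) k
        simp only [S]
        omega
      rw [hs, wcat_add, cat_spec (fun n => x (n + 1)) (fun n => hx (n + 1)) k i h]
  exact (eq_cat x hx _ h).symm

/-- Iterated prefixing by `u`. -/
def itc (u : List A) (β : ℕ → A) : ℕ → ℕ → A
  | 0 => β
  | k + 1 => wcat u (itc u β k)

lemma itc_eval (u : List A) (hu : u ≠ []) (β : ℕ → A) :
    ∀ k n, n < k * u.length → itc u β k n = wpow u n := by
  intro k
  induction k with
  | zero => intro n hn; simp at hn
  | succ k ih =>
    intro n hn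
    by_cases h : n < u.length
    · show wcat u (itc u β k) n = wpow u n
      rw [wcat_lt u _ h]
      unfold wpow
      rw [Nat.mod_eq_of_lt h, List.getD_eq_getElem _ _ h]
      simp [List.get_eq_getElem]
    · push_neg at h
      obtain ⟨m, rfl⟩ : ∃ m, n = u.length + m := ⟨n - u.length, by omega⟩
      show wcat u (itc u β k) _ = _
      rw [wcat_add]
      rw [ih m (by rw [Nat.succ_mul] at hn; omega)]
      unfold wpow
      rw [Nat.add_mod_left]

lemma tendsto_itc [TopologicalSpace A] (u : List A) (hu : u ≠ []) (β : ℕ → A) :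
    Tendsto (itc u β) atTop (𝓝 (wpow u)) := by
  rw [tendsto_pi_nhds]
  intro n
  apply tendsto_const_nhds.congr'
  filter_upwards [eventually_ge_atTop (n + 1)] with k hk
  have h1 : 1 ≤ u.length := List.length_pos_iff.mpr hu
  exact (itc_eval u hu β k n (by nlinarith)).symm

lemma push_le [TopologicalSpace A] (φ : (ℕ → A) → ℝ) (hcont : Continuous φ)
    (ha : ∀ (u : List A) (α β : ℕ → A), φ α ≤ φ β → φ (wcat u α) ≤ φ (wcat u β))
    (u : List A) (hu : u ≠ []) (β : ℕ → A)
    (h : φ β ≤ φ (wcat u β)) : φ (wcat u β) ≤ φ (wpow u) := by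
  have mono : Monotone (fun k => φ (itc u β k)) := by
    apply monotone_nat_of_le_succ
    intro k
    induction k with
    | zero => exact h
    | succ k ih => exact ha u _ _ ih
  have hlim : Tendsto (fun k => φ (itc u β k)) atTop (𝓝 (φ (wpow u))) :=
    (hcont.tendsto _).comp (tendsto_itc u hu β)
  exact mono.ge_of_tendsto hlim 1

lemma step [TopologicalSpace A] (φ : (ℕ → A) → ℝ) (hcont : Continuous φ)
    (ha : ∀ (u : List A) (α β : ℕ → A), φ α ≤ φ β → φ (wcat u α) ≤ φ (wcat u β))
    {B : ℝ} (y : ℕ → List A) (hy : ∀ n, y n ≠ []) (hB : ∀ n, φ (wpow (y n)) ≤ B)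
    (hlt : B < φ (cat y)) : φ (cat y) ≤ φ (cat (fun n => y (n + 1))) := by
  have hdec := cat_succ y hy
  by_cases hc : φ (cat y) ≤ φ (cat (fun n => y (n + 1)))
  · exact hc
  push_neg at hc
  exfalso
  have h1 : φ (cat (fun n => y (n + 1))) ≤ φ (wcat (y 0) (cat (fun n => y (n + 1)))) := by
    rw [← hdec]; exact hc.le
  have h2 := push_le φ hcont ha (y 0) (hy 0) _ h1
  rw [← hdec] at h2
  have := hB 0
  linarith

lemma tails [TopologicalSpace A] (φ : (ℕ → A) → ℝ) (hcont : Continuous φ)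
    (ha : ∀ (u : List A) (α β : ℕ → A), φ α ≤ φ β → φ (wcat u α) ≤ φ (wcat u β))
    {B : ℝ} (y : ℕ → List A) (hy : ∀ n, y n ≠ []) (hB : ∀ n, φ (wpow (y n)) ≤ B)
    (hlt : B < φ (cat y)) : ∀ k, φ (cat y) ≤ φ (cat (fun n => y (n + k))) := by
  intro k
  induction k with
  | zero =>
    have he : (fun n => y (n + 0)) = y := by funext n; simp
    rw [he]
  | succ k ih =>
    have h1 : B < φ (cat (fun n => y (n + k))) := lt_of_lt_of_le hlt ih
    have h2 := step φ hcont ha (fun n => y (n + k)) (fun n => hy _) (fun n => hB _) h1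
    have h3 : (fun n => y (n + 1 + k)) = (fun n => y (n + (k + 1))) := by
      funext n; congr 1; omega
    rw [h3] at h2
    exact ih.trans h2

lemma prefix_mono (φ : (ℕ → A) → ℝ)
    (ha : ∀ (u : List A) (α β : ℕ → A), φ α ≤ φ β → φ (wcat u α) ≤ φ (wcat u β)) :
    ∀ (k : ℕ) (z z' : ℕ → List A), (∀ n, z n ≠ []) → (∀ n, z' n ≠ []) →
      (∀ j, j < k → z j = z' j) →
      φ (cat (fun n => z (n + k))) ≤ φ (cat (fun n => z' (n + k))) →
      φ (cat z) ≤ φ (cat z') := by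
  intro k
  induction k with
  | zero => intro z z' _ _ _ h; simpa using h
  | succ k ih =>
    intro z z' hz hz' hag h
    rw [cat_succ z hz, cat_succ z' hz', ← hag 0 (by omega)]
    apply ha (z 0)
    apply ih (fun n => z (n + 1)) (fun n => z' (n + 1)) (fun n => hz _) (fun n => hz' _)
      (fun j hj => hag (j + 1) (by omega))
    have e : ∀ (w : ℕ → List A), (fun n => w (n + k + 1)) = (fun n => w (n + (k + 1))) := by
      intro w; funext n; exact congrArg w (Nat.add_assoc n k 1)
    show φ (cat fun n => z (n + k + 1)) ≤ φ (cat fun n => z' (n + k + 1))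
    rw [e z, e z']
    exact h

end CondAC

open CondAC

theorem condition_a_implies_condition_c
    {A : Type*} [Fintype A] [Nonempty A] [TopologicalSpace A] [DiscreteTopology A]
    (φ : (ℕ → A) → ℝ) (hcont : Continuous φ)
    (ha : ∀ (u : List A) (α β : ℕ → A), φ α ≤ φ β → φ (wcat u α) ≤ φ (wcat u β))
    (x : ℕ → List A) (hx : ∀ n, x n ≠ [])
    (γ : ℕ → A) (hγ : IsInfiniteConcat x γ)
    (δ : ℕ → A) (hδ : IsInfiniteConcat (fun n => x (2 * n)) δ)
    (hsup : (⨆ n : ℕ, φ (wpow (x n))) < φ γ) :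
    φ γ ≤ φ δ := by
  classical
  set B := ⨆ n : ℕ, φ (wpow (x n)) with hBdef
  have hbd : BddAbove (Set.range fun n : ℕ => φ (wpow (x n))) := by
    apply BddAbove.mono _ (isCompact_range hcont).bddAbove
    rintro v ⟨n, rfl⟩
    exact ⟨wpow (x n), rfl⟩
  have hBn : ∀ n, φ (wpow (x n)) ≤ B := fun n => le_ciSup hbd n
  have hγeq : γ = cat x := eq_cat x hx γ hγ
  have hy : ∀ n : ℕ, (fun n => x (2 * n)) n ≠ [] := fun n => hx _
  have hδeq : δ = cat (fun n => x (2 * n)) := eq_cat _ hy δ hδ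
  set z : ℕ → ℕ → List A := fun N j => if j ≤ N then x (2 * j) else x (j + N) with hzdef
  have hz : ∀ N n, z N n ≠ [] := by
    intro N n
    simp only [hzdef]
    split <;> apply hx
  have hz0 : z 0 = x := by
    funext j
    simp only [hzdef]
    by_cases h : j ≤ 0
    · rw [if_pos h]; congr 1; omega
    · rw [if_neg h]; congr 1
  have hsupx : B < φ (cat x) := by rw [← hγeq]; exact hsup
  have key : ∀ N, φ (cat x) ≤ φ (cat (z N)) := by
    intro N
    induction N with
    | zero => rw [hz0]
    | succ N ih =>
      refine ih.trans ?_
      apply prefix_mono φ ha (N + 1) (z N) (z (N + 1)) (hz N) (hz (N + 1))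
      · intro j hj
        simp only [hzdef]
        rw [if_pos (by omega), if_pos (by omega)]
      · have e1 : (fun n => z N (n + (N + 1))) = (fun n => x (n + (2 * N + 1))) := by
          funext n
          simp only [hzdef]
          rw [if_neg (by omega)]
          congr 1
          omega
        have e2 : (fun n => z (N + 1) (n + (N + 1))) = (fun n => x (n + (2 * N + 1) + 1)) := by
          funext n
          simp only [hzdef]
          by_cases h : n + (N + 1) ≤ N + 1
          · rw [if_pos h]; congr 1; omega
          · rw [if_neg h]; congr 1; omega
        rw [e1, e2]
        have h1 : B < φ (cat (fun n => x (n + (2 * N + 1)))) :=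
          lt_of_lt_of_le hsupx (tails φ hcont ha x hx hBn hsupx (2 * N + 1))
        have h2 := step φ hcont ha (fun n => x (n + (2 * N + 1)))
          (fun n => hx _) (fun n => hBn _) h1
        have e3 : (fun n => x (n + 1 + (2 * N + 1))) = (fun n => x (n + (2 * N + 1) + 1)) := by
          funext n; congr 1; omega
        exact h2.trans_eq (congrArg φ (congrArg cat e3))
  have hconv : Tendsto (fun N => cat (z N)) atTop (𝓝 (cat (fun n => x (2 * n)))) := by
    rw [tendsto_pi_nhds]
    intro m
    apply tendsto_const_nhds.congr'
    filter_upwards [eventually_ge_atTop m] with N hN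
    obtain ⟨k, i, hik, hm⟩ := exists_decomp (fun n => x (2 * n)) hy m
    have hkm : k ≤ m := le_trans (le_S _ hy k) (by omega)
    have hSz : S (z N) k = S (fun n => x (2 * n)) k := by
      apply Finset.sum_congr rfl
      intro j hj
      simp only [Finset.mem_range] at hj
      simp only [hzdef]
      rw [if_pos (by omega)]
    have hzk : z N k = x (2 * k) := by
      simp only [hzdef]
      rw [if_pos (by omega)]
    have hik' : i < (z N k).length := by rw [hzk]; exact hik
    subst hm
    rw [cat_spec' _ hy k i hik]
    have hSe : S (fun n => x (2 * n)) k + i = S (z N) k + i := by rw [hSz]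
    rw [hSe, cat_spec' (z N) (hz N) k i hik', hzk]
  have hlim : Tendsto (fun N => φ (cat (z N))) atTop (𝓝 (φ (cat (fun n => x (2 * n))))) :=
    (hcont.tendsto _).comp hconv
  rw [hγeq, hδeq]
  exact ge_of_tendsto' hlim key
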